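/- For skew-symmetric (with respect to a nondegenerate symmetric bilinear form) endomorphisms A of ℝⁿ with A²=0 belonging to a family closed under the relations A₁A₂A₃ = 0, one has U₀ = Σ_A im A ∩ ∩_A ker A, i.e., the radical of U_Γ equals the intersection of the total image with the common kernel. -/

import Mathlib

/-- `U₀ = Σ_A im A ∩ ∩_A ker A`: for a family `𝒜` of skew-symmetric
endomorphisms with `A² = 0` (hence `im A = (ker A)^⊥`) and vanishing triple
products, the radical of `U_Γ` equals the intersection of the total image with
the common kernel. -/
theorem stmt16 {n : ℕ}
    (B : LinearMap.BilinForm ℝ (Fin n → ℝ))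
    (hsymm : ∀ x y, B x y = B y x)
    (hnd : B.Nondegenerate)
    (𝒜 : Set ((Fin n → ℝ) →ₗ[ℝ] (Fin n → ℝ)))
    (hskew : ∀ A ∈ 𝒜, ∀ x y, B (A x) y = - B x (A y))
    (hA2 : ∀ A ∈ 𝒜, A ∘ₗ A = 0)
    (htriple : ∀ A ∈ 𝒜, ∀ A' ∈ 𝒜, ∀ A'' ∈ 𝒜, A ∘ₗ A' ∘ₗ A'' = 0)
    (UΓ U₀ : Submodule ℝ (Fin n → ℝ))
    (hUΓ : UΓ = ⨆ A ∈ 𝒜, LinearMap.range A)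
    (hU₀ : U₀ = UΓ ⊓ B.orthogonal UΓ) :
    U₀ = UΓ ⊓ (⨅ A ∈ 𝒜, LinearMap.ker A) := by
  subst hU₀
  congr 1
  ext x
  rw [LinearMap.BilinForm.mem_orthogonal_iff]
  simp only [Submodule.mem_iInf, LinearMap.mem_ker]
  constructor
  · intro hx A hA
    apply hnd.1
    intro y
    rw [hskew A hA, neg_eq_zero, hsymm]
    refine hx _ ?_
    rw [hUΓ]
    exact Submodule.mem_iSup_of_mem A (Submodule.mem_iSup_of_mem hA ⟨y, rfl⟩)
  · intro hx u hu
    have : UΓ ≤ LinearMap.ker (B.flip x) := by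
      rw [hUΓ]
      refine iSup₂_le fun A hA => ?_
      rintro _ ⟨y, rfl⟩
      have : B (A y) x = 0 := by rw [hskew A hA, hx A hA, map_zero, neg_zero]
      simpa [LinearMap.mem_ker] using this
    simpa using this hu
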